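/- If a stabilizer s_u ∈ ⟨S_0⟩ is unmasked at some intermediate point of the measurement sequence (i.e., some u ∈ span(C) ∩ span(V) has associated stabilizer s_u), then after any further measurements processed by the distance-algorithm update rules, there still exists u' ∈ span(C) ∩ span(V) with associated stabilizer s_u (or the reconstruction succeeds via an identity element in C). Hence computing span(C) ∩ span(V) once at the end of the sequence recovers all unmasked stabilizers. -/

import Mathlib

abbrev PauliVec (n : ℕ) := (Fin n → ZMod 2) × (Fin n → ZMod 2)

def sympl {n : ℕ} (v w : PauliVec n) : ZMod 2 :=
  ∑ i, (v.1 i * w.2 i + v.2 i * w.1 i)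

/-- The state of the distance algorithm: `C` is the list of evolved stabilizer
generators, each paired with its associated original stabilizer; `V` is the list
of accumulated (updated) measurement operators; `meas` records all measurement
operators performed so far. -/
structure AlgState (n : ℕ) where
  C : List (PauliVec n × PauliVec n)
  V : List (PauliVec n)
  meas : List (PauliVec n)

/-- Initial state of the distance algorithm: `C = S₀` (each generator associated
with itself), `V` empty, no measurements yet. -/
def initState {n : ℕ} (S₀ : List (PauliVec n)) : AlgState n :=
  ⟨S₀.map fun s => (s, s), [], []⟩

/-- One step of the distance algorithm, processing the measurement `m` according
to cases 1–4 (depending on which elements of `C` and `V` anticommute with `m`). -/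
inductive Step {n : ℕ} : AlgState n → PauliVec n → AlgState n → Prop
  | case1 (σ : AlgState n) (m : PauliVec n)
      (hC : ∀ cs ∈ σ.C, sympl cs.1 m = 0) (hV : ∀ v ∈ σ.V, sympl v m = 0) :
      Step σ m ⟨σ.C, σ.V ++ [m], σ.meas ++ [m]⟩
  | case2 (σ : AlgState n) (m : PauliVec n) (cj : PauliVec n × PauliVec n)
      (hcj : cj ∈ σ.C) (hanti : sympl cj.1 m = 1)
      (hV : ∀ v ∈ σ.V, sympl v m = 0) :
      Step σ m ⟨(σ.C.erase cj).map fun cs =>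
          if sympl cs.1 m = 1 then (cs.1 + cj.1, cs.2 + cj.2) else cs,
        σ.V ++ [m], σ.meas ++ [m]⟩
  | case3 (σ : AlgState n) (m : PauliVec n) (mj : PauliVec n)
      (hmj : mj ∈ σ.V) (hanti : sympl mj m = 1)
      (hC : ∀ cs ∈ σ.C, sympl cs.1 m = 0) :
      Step σ m ⟨σ.C,
        ((σ.V.erase mj).map fun v => if sympl v m = 1 then v + mj else v) ++ [m],
        σ.meas ++ [m]⟩
  | case4 (σ : AlgState n) (m : PauliVec n) (mj : PauliVec n)
      (hmj : mj ∈ σ.V) (hanti : sympl mj m = 1)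
      (cj : PauliVec n × PauliVec n) (hcj : cj ∈ σ.C) (hcanti : sympl cj.1 m = 1) :
      Step σ m ⟨σ.C.map fun cs =>
          if sympl cs.1 m = 1 then (cs.1 + mj, cs.2) else cs,
        ((σ.V.erase mj).map fun v => if sympl v m = 1 then v + mj else v) ++ [m],
        σ.meas ++ [m]⟩

/-- Running the distance algorithm on a list of measurements. -/
inductive RunList {n : ℕ} : AlgState n → List (PauliVec n) → AlgState n → Prop
  | nil (σ : AlgState n) : RunList σ [] σ
  | cons {σ σ' σ'' : AlgState n} {m : PauliVec n} {ms : List (PauliVec n)} :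
      Step σ m σ' → RunList σ' ms σ'' → RunList σ (m :: ms) σ''

open Submodule in
/-- The `F₂`-span of a list of Pauli vectors. -/
def listSpan {n : ℕ} (L : List (PauliVec n)) : Submodule (ZMod 2) (PauliVec n) :=
  span (ZMod 2) {v | v ∈ L}


section Aux

variable {n : ℕ}

lemma sympl_add_left (u v w : PauliVec n) : sympl (u + v) w = sympl u w + sympl v w := by
  simp only [sympl, Prod.fst_add, Prod.snd_add, Pi.add_apply]
  rw [← Finset.sum_add_distrib]
  congr 1; funext i; ring

lemma sympl_zero_left (w : PauliVec n) : sympl 0 w = 0 := by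
  simp [sympl]

lemma sympl_smul_left (c : ZMod 2) (u w : PauliVec n) :
    sympl (c • u) w = c * sympl u w := by
  simp only [sympl, Prod.smul_fst, Prod.smul_snd, Pi.smul_apply, smul_eq_mul,
    Finset.mul_sum]
  congr 1; funext i; ring

lemma pv_add_self (x : PauliVec n) : x + x = 0 := by
  have h : ∀ f : Fin n → ZMod 2, f + f = 0 := by
    intro f; funext i; exact CharTwo.add_self_eq_zero _
  exact Prod.ext (h x.1) (h x.2)

lemma zmod2_cases (c : ZMod 2) : c = 0 ∨ c = 1 := by
  fin_cases c
  · exact Or.inl rfl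
  · exact Or.inr rfl

lemma sympl_span_zero {V : List (PauliVec n)} {m u : PauliVec n}
    (hV : ∀ v ∈ V, sympl v m = 0) (hu : u ∈ listSpan V) : sympl u m = 0 := by
  induction hu using Submodule.span_induction with
  | mem x hx => exact hV x hx
  | zero => exact sympl_zero_left m
  | add x y _ _ hx hy => rw [sympl_add_left, hx, hy, add_zero]
  | smul c x _ hx => rw [sympl_smul_left, hx, mul_zero]

lemma listSpan_mono {V W : List (PauliVec n)} (h : ∀ v ∈ V, v ∈ W) :
    listSpan V ≤ listSpan W :=
  Submodule.span_mono h

lemma mem_span_update (V : List (PauliVec n)) (m mj : PauliVec n)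
    (hmj : mj ∈ V) (hanti : sympl mj m = 1) {u : PauliVec n}
    (hu : u ∈ listSpan V) :
    u + sympl u m • mj ∈
      listSpan (((V.erase mj).map fun v => if sympl v m = 1 then v + mj else v) ++ [m]) := by
  set N := listSpan (((V.erase mj).map fun v => if sympl v m = 1 then v + mj else v) ++ [m])
  induction hu using Submodule.span_induction with
  | mem x hx =>
    by_cases hxm : x = mj
    · subst hxm
      rw [hanti, one_smul, pv_add_self]
      exact zero_mem N
    · have hxe : x ∈ V.erase mj := List.mem_erase_of_ne hxm |>.mpr hx
      have : x + sympl x m • mj ∈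
          ((V.erase mj).map fun v => if sympl v m = 1 then v + mj else v) ++ [m] := by
        rw [List.mem_append]
        left
        rw [List.mem_map]
        refine ⟨x, hxe, ?_⟩
        rcases zmod2_cases (sympl x m) with h | h
        · rw [h]; simp
        · rw [h]; simp
      exact Submodule.subset_span this
  | zero =>
    rw [sympl_zero_left, zero_smul, add_zero]
    exact zero_mem N
  | add x y _ _ hx hy =>
    have : x + y + sympl (x + y) m • mj = (x + sympl x m • mj) + (y + sympl y m • mj) := by
      rw [sympl_add_left, add_smul]; abel
    rw [this]
    exact add_mem hx hy
  | smul c x _ hx =>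
    have : c • x + sympl (c • x) m • mj = c • (x + sympl x m • mj) := by
      rw [sympl_smul_left, mul_smul, smul_add]
    rw [this]
    exact Submodule.smul_mem N c hx

lemma sum_map_fst_update (l : List (PauliVec n × PauliVec n)) (m a b : PauliVec n) :
    ((l.map fun cs => if sympl cs.1 m = 1 then (cs.1 + a, cs.2 + b) else cs).map Prod.fst).sum
      = (l.map Prod.fst).sum + sympl (l.map Prod.fst).sum m • a := by
  induction l with
  | nil => simp [sympl_zero_left]
  | cons cs l ih =>
    simp only [List.map_cons, List.sum_cons, ih, sympl_add_left, add_smul]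
    rcases zmod2_cases (sympl cs.1 m) with h | h
    · rw [h]; simp; abel
    · rw [h]; simp; abel

lemma sum_map_snd_update (l : List (PauliVec n × PauliVec n)) (m a b : PauliVec n) :
    ((l.map fun cs => if sympl cs.1 m = 1 then (cs.1 + a, cs.2 + b) else cs).map Prod.snd).sum
      = (l.map Prod.snd).sum + sympl (l.map Prod.fst).sum m • b := by
  induction l with
  | nil => simp [sympl_zero_left]
  | cons cs l ih =>
    simp only [List.map_cons, List.sum_cons, ih, sympl_add_left, add_smul]
    rcases zmod2_cases (sympl cs.1 m) with h | h
    · rw [h]; simp; abel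
    · rw [h]; simp; abel

lemma sum_map_fst_update4 (l : List (PauliVec n × PauliVec n)) (m a : PauliVec n) :
    ((l.map fun cs => if sympl cs.1 m = 1 then (cs.1 + a, cs.2) else cs).map Prod.fst).sum
      = (l.map Prod.fst).sum + sympl (l.map Prod.fst).sum m • a := by
  induction l with
  | nil => simp [sympl_zero_left]
  | cons cs l ih =>
    simp only [List.map_cons, List.sum_cons, ih, sympl_add_left, add_smul]
    rcases zmod2_cases (sympl cs.1 m) with h | h
    · rw [h]; simp; abel
    · rw [h]; simp; abel

lemma sum_map_snd_update4 (l : List (PauliVec n × PauliVec n)) (m a : PauliVec n) :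
    ((l.map fun cs => if sympl cs.1 m = 1 then (cs.1 + a, cs.2) else cs).map Prod.snd).sum
      = (l.map Prod.snd).sum := by
  induction l with
  | nil => simp
  | cons cs l ih =>
    simp only [List.map_cons, List.sum_cons, ih]
    rcases zmod2_cases (sympl cs.1 m) with h | h
    · rw [h]; simp
    · rw [h]; simp

lemma perm_cons_erase' {α : Type*} [BEq α] [LawfulBEq α]
    {a : α} {l : List α} (h : a ∈ l) : l.Perm (a :: l.erase a) := by
  induction l with
  | nil => cases h
  | cons b l ih =>
    rw [List.erase_cons]
    by_cases hb : b == a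
    · simp only [hb, if_pos]
      have : b = a := eq_of_beq hb
      subst this
      exact List.Perm.refl _
    · simp only [hb, if_neg, Bool.false_eq_true, not_false_iff]
      have hal : a ∈ l := by
        rcases List.mem_cons.mp h with h' | h'
        · simp [h'] at hb
        · exact h'
      exact (List.Perm.cons b (ih hal)).trans (List.Perm.swap a b _)

lemma sum_erase_eq {α M : Type*} [BEq α] [LawfulBEq α] [AddCommMonoid M]
    (l : List α) {a : α} (ha : a ∈ l) (f : α → M) :
    (l.map f).sum = f a + ((l.erase a).map f).sum := by
  have hp := perm_cons_erase' ha
  have := (hp.map f).sum_eq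
  simpa using this

lemma sympl_sublist_sum_zero {C : List (PauliVec n × PauliVec n)} {m : PauliVec n}
    (hC : ∀ cs ∈ C, sympl cs.1 m = 0) (sub : List (PauliVec n × PauliVec n))
    (hsub : sub.Sublist C) : sympl (sub.map Prod.fst).sum m = 0 := by
  induction sub with
  | nil => simpa using sympl_zero_left m
  | cons cs l ih =>
    have h1 : sympl cs.1 m = 0 := hC cs (hsub.subset List.mem_cons_self)
    have h2 := ih ((List.sublist_cons_self cs l).trans hsub)
    simp only [List.map_cons, List.sum_cons, sympl_add_left, h1, h2, add_zero]

set_option maxHeartbeats 1000000 in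
lemma step_persists {σ σ' : AlgState n} {m : PauliVec n} (hs : Step σ m σ')
    (sub : List (PauliVec n × PauliVec n)) (hsub : sub.Sublist σ.C)
    (huV : (sub.map Prod.fst).sum ∈ listSpan σ.V) :
    ∃ sub' : List (PauliVec n × PauliVec n),
      sub'.Sublist σ'.C ∧ (sub'.map Prod.fst).sum ∈ listSpan σ'.V ∧
        (sub'.map Prod.snd).sum = (sub.map Prod.snd).sum := by
  have happ : ∀ (W : List (PauliVec n)) (x : PauliVec n),
      listSpan W ≤ listSpan (W ++ [x]) := by
    intro W x
    exact listSpan_mono (fun v hv => List.mem_append.mpr (Or.inl hv))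
  cases hs with
  | case1 hC hV =>
    exact ⟨sub, hsub, happ σ.V m huV, rfl⟩
  | case2 cj hcj hanti hV =>
    have hu0 : sympl (sub.map Prod.fst).sum m = 0 := sympl_span_zero hV huV
    refine ⟨(sub.erase cj).map _, (hsub.erase cj).map _, ?_, ?_⟩
    · rw [sum_map_fst_update]
      by_cases hmem : cj ∈ sub
      · have he := sum_erase_eq sub hmem Prod.fst
        have hS1 : ((sub.erase cj).map Prod.fst).sum = (sub.map Prod.fst).sum + cj.1 := by
          rw [he, add_comm cj.1, add_assoc, pv_add_self, add_zero]
        rw [hS1, sympl_add_left, hu0, hanti, zero_add, one_smul, add_assoc,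
          pv_add_self, add_zero]
        exact happ σ.V m huV
      · rw [List.erase_of_not_mem hmem, hu0, zero_smul, add_zero]
        exact happ σ.V m huV
    · rw [sum_map_snd_update]
      by_cases hmem : cj ∈ sub
      · have he := sum_erase_eq sub hmem Prod.fst
        have hS1 : ((sub.erase cj).map Prod.fst).sum = (sub.map Prod.fst).sum + cj.1 := by
          rw [he, add_comm cj.1, add_assoc, pv_add_self, add_zero]
        have he2 := sum_erase_eq sub hmem Prod.snd
        have hS2 : ((sub.erase cj).map Prod.snd).sum = (sub.map Prod.snd).sum + cj.2 := by
          rw [he2, add_comm cj.2, add_assoc, pv_add_self, add_zero]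
        rw [hS1, hS2, sympl_add_left, hu0, hanti, zero_add, one_smul, add_assoc,
          pv_add_self, add_zero]
      · rw [List.erase_of_not_mem hmem, hu0, zero_smul, add_zero]
  | case3 mj hmj hanti hC =>
    refine ⟨sub, hsub, ?_, rfl⟩
    have hu0 : sympl (sub.map Prod.fst).sum m = 0 := sympl_sublist_sum_zero hC sub hsub
    have := mem_span_update σ.V m mj hmj hanti huV
    rwa [hu0, zero_smul, add_zero] at this
  | case4 mj hmj hanti cj hcj hcanti =>
    refine ⟨sub.map _, hsub.map _, ?_, ?_⟩
    · rw [sum_map_fst_update4]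
      exact mem_span_update σ.V m mj hmj hanti huV
    · exact sum_map_snd_update4 sub m mj

lemma run_persists {σ σ' : AlgState n} {ms : List (PauliVec n)}
    (h : RunList σ ms σ') :
    ∀ sub : List (PauliVec n × PauliVec n), sub.Sublist σ.C →
      (sub.map Prod.fst).sum ∈ listSpan σ.V →
      ∃ sub' : List (PauliVec n × PauliVec n),
        sub'.Sublist σ'.C ∧ (sub'.map Prod.fst).sum ∈ listSpan σ'.V ∧
          (sub'.map Prod.snd).sum = (sub.map Prod.snd).sum := by
  induction h with
  | nil σ => exact fun sub h1 h2 => ⟨sub, h1, h2, rfl⟩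
  | cons hstep _ ih =>
    intro sub h1 h2
    obtain ⟨s1, a, b, c⟩ := step_persists hstep sub h1 h2
    obtain ⟨s2, a2, b2, c2⟩ := ih s1 a b
    exact ⟨s2, a2, b2, c2.trans c⟩

end Aux

/-- if a stabilizer `s_u ∈ ⟨S₀⟩` is unmasked at some intermediate
point of the measurement sequence (some `u ∈ span(C) ∩ span(V)`, given by a
subcollection of `C`, has associated stabilizer `s_u`), then after any further
measurements there is still an element of `span(C) ∩ span(V)` with associated
stabilizer `s_u`.  Hence computing `span(C) ∩ span(V)` once at the end of the
sequence recovers all unmasked stabilizers. -/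
theorem unmasked_persists {n : ℕ} (S₀ : List (PauliVec n))
    (hiso : ∀ x ∈ listSpan S₀, ∀ y ∈ listSpan S₀, sympl x y = 0)
    (ms : List (PauliVec n)) (σ : AlgState n)
    (hrun : RunList (initState S₀) ms σ)
    (s_u : PauliVec n)
    (sub : List (PauliVec n × PauliVec n)) (hsub : sub.Sublist σ.C)
    (huV : (sub.map Prod.fst).sum ∈ listSpan σ.V)
    (hassoc : (sub.map Prod.snd).sum = s_u)
    (ms' : List (PauliVec n)) (σ' : AlgState n)
    (hrun' : RunList σ ms' σ') :
    ∃ sub' : List (PauliVec n × PauliVec n),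
      sub'.Sublist σ'.C ∧
      (sub'.map Prod.fst).sum ∈ listSpan σ'.V ∧
      (sub'.map Prod.snd).sum = s_u := by
  obtain ⟨sub', h1, h2, h3⟩ := run_persists hrun' sub hsub huV
  exact ⟨sub', h1, h2, h3.trans hassoc⟩
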